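/- Let n ≥ 2 and let K, L ∈ 𝒦₀(ℝⁿ). Then ∫_{S^{n−1}} (ln ρ_K(u) + ln ρ_L(u) − 2·ln ρ_{K∩L}(u)) dσ(u) = ∫_{S^{n−1}} |ln(ρ_K(u)/ρ_L(u))| dσ(u) = (1/(n·|Dₙ|)) · ∫_{K△L} ‖x‖^{−n} dx. -/

import Mathlib

open MeasureTheory

/-- The uniform (rotation invariant) probability measure `σ` on the unit sphere
`S^{n-1} ⊆ ℝⁿ`. -/
noncomputable def sphereProb (n : ℕ) :
    Measure (Metric.sphere (0 : EuclideanSpace ℝ (Fin n)) 1) :=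
  ((volume : Measure (EuclideanSpace ℝ (Fin n))).toSphere Set.univ)⁻¹ •
    (volume : Measure (EuclideanSpace ℝ (Fin n))).toSphere

/-- The radial function `ρ_K(u) = max {r : r • u ∈ K}` of a set `K ⊆ ℝⁿ`. -/
noncomputable def radialFn {n : ℕ} (K : Set (EuclideanSpace ℝ (Fin n)))
    (u : EuclideanSpace ℝ (Fin n)) : ℝ :=
  sSup {r : ℝ | r • u ∈ K}

/-- The Lebesgue volume `|Dₙ|` of the closed Euclidean unit ball in `ℝⁿ`. -/
noncomputable def unitBallVolume (n : ℕ) : ℝ :=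
  (volume (Metric.closedBall (0 : EuclideanSpace ℝ (Fin n)) 1)).toReal

open Metric Set

section radial
variable {n : ℕ} {K L : Set (EuclideanSpace ℝ (Fin n))} {u : EuclideanSpace ℝ (Fin n)}

theorem radialFn_spec (hKcp : IsCompact K) (hKcv : Convex ℝ K) (hKint : 0 ∈ interior K)
    (hu : ‖u‖ = 1) :
    0 < radialFn K u ∧ ∀ r : ℝ, 0 ≤ r → (r • u ∈ K ↔ r ≤ radialFn K u) := by
  obtain ⟨R, hR⟩ := hKcp.isBounded.subset_closedBall 0
  have h0K : (0 : EuclideanSpace ℝ (Fin n)) ∈ K := interior_subset hKint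
  set S := {r : ℝ | r • u ∈ K} with hS
  have hne : (0 : ℝ) ∈ S := by simp [hS, h0K]
  have hbdd : BddAbove S := by
    refine ⟨R, fun r hr => ?_⟩
    have := hR hr
    rw [mem_closedBall_zero_iff, norm_smul, hu, mul_one] at this
    exact (le_abs_self r).trans this
  have hclosed : IsClosed S := hKcp.isClosed.preimage (continuous_id.smul continuous_const)
  have hmem : radialFn K u ∈ S := hclosed.csSup_mem ⟨0, hne⟩ hbdd
  have hpos : 0 < radialFn K u := by
    obtain ⟨ε, hε, hball⟩ := Metric.mem_nhds_iff.1 (mem_interior_iff_mem_nhds.1 hKint)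
    have hmem2 : ε / 2 ∈ S := by
      apply hball
      rw [mem_ball_zero_iff, norm_smul, hu, mul_one]
      rw [Real.norm_eq_abs, abs_of_pos (by linarith)]; linarith
    have := le_csSup hbdd hmem2
    calc (0:ℝ) < ε / 2 := by linarith
      _ ≤ _ := this
  refine ⟨hpos, fun r hr => ⟨fun h => le_csSup hbdd h, fun h => ?_⟩⟩
  have : (r / radialFn K u) • (radialFn K u • u) = r • u := by
    rw [smul_smul, div_mul_cancel₀ _ hpos.ne']
  rw [← this]
  exact hKcv.smul_mem_of_zero_mem h0K hmem ⟨div_nonneg hr hpos.le, div_le_one_of_le₀ h hpos.le⟩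

theorem radialFn_inter (hKcp : IsCompact K) (hKcv : Convex ℝ K) (hKint : 0 ∈ interior K)
    (hLcp : IsCompact L) (hLcv : Convex ℝ L) (hLint : 0 ∈ interior L)
    (hu : ‖u‖ = 1) :
    radialFn (K ∩ L) u = min (radialFn K u) (radialFn L u) := by
  have hint : (0 : EuclideanSpace ℝ (Fin n)) ∈ interior (K ∩ L) := by
    rw [interior_inter]; exact ⟨hKint, hLint⟩
  obtain ⟨hKp, hK⟩ := radialFn_spec hKcp hKcv hKint hu
  obtain ⟨hLp, hL⟩ := radialFn_spec hLcp hLcv hLint hu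
  obtain ⟨hIp, hI⟩ := radialFn_spec (hKcp.inter hLcp) (hKcv.inter hLcv) hint hu
  have h1 : radialFn (K ∩ L) u • u ∈ K ∩ L := by rw [hI _ hIp.le]
  apply le_antisymm
  · exact le_min ((hK _ hIp.le).1 h1.1) ((hL _ hIp.le).1 h1.2)
  · have hm : 0 ≤ min (radialFn K u) (radialFn L u) := le_min hKp.le hLp.le
    refine (hI _ hm).1 ⟨(hK _ hm).2 (min_le_left _ _), (hL _ hm).2 (min_le_right _ _)⟩

end radial

section part2
open ENNReal

lemma log_max_sub_log_min {a b : ℝ} (ha : 0 < a) (hb : 0 < b) :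
    Real.log (max a b) - Real.log (min a b) = |Real.log a - Real.log b| := by
  rcases le_total a b with h | h
  · rw [max_eq_right h, min_eq_left h, abs_sub_comm,
      abs_of_nonneg (sub_nonneg.2 ((Real.log_le_log_iff ha hb).2 h))]
  · rw [max_eq_left h, min_eq_right h,
      abs_of_nonneg (sub_nonneg.2 ((Real.log_le_log_iff hb ha).2 h))]

set_option maxHeartbeats 1000000 in
theorem part2 {n : ℕ} (hn : 2 ≤ n)
    (K L : Set (EuclideanSpace ℝ (Fin n)))
    (hKcp : IsCompact K) (hKcv : Convex ℝ K) (hKint : 0 ∈ interior K)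
    (hLcp : IsCompact L) (hLcv : Convex ℝ L) (hLint : 0 ∈ interior L) :
    (∫ u : Metric.sphere (0 : EuclideanSpace ℝ (Fin n)) 1,
          |Real.log (radialFn K ↑u) - Real.log (radialFn L ↑u)| ∂(sphereProb n))
      = (1 / ((n : ℝ) * unitBallVolume n)) *
          ∫ x in symmDiff K L, ‖x‖ ^ (-(n : ℝ)) := by
  haveI : Nonempty (Fin n) := ⟨⟨0, by omega⟩⟩
  haveI : Nontrivial (EuclideanSpace ℝ (Fin n)) := inferInstance
  set ν := (volume : Measure (EuclideanSpace ℝ (Fin n))).toSphere with hν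
  have hsp : ∀ u : Metric.sphere (0 : EuclideanSpace ℝ (Fin n)) 1, ‖(u : EuclideanSpace ℝ (Fin n))‖ = 1 := fun u =>
    mem_sphere_zero_iff_norm.1 u.2
  set gfun : Metric.sphere (0 : EuclideanSpace ℝ (Fin n)) 1 → ℝ :=
    fun u => |Real.log (radialFn K u) - Real.log (radialFn L u)| with hgfun
  have hmeasKL : MeasurableSet (symmDiff K L) := by
    rw [Set.symmDiff_def]
    exact (hKcp.isClosed.measurableSet.diff hLcp.isClosed.measurableSet).union
      (hLcp.isClosed.measurableSet.diff hKcp.isClosed.measurableSet)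
  set f : EuclideanSpace ℝ (Fin n) → ℝ≥0∞ :=
    fun x => (symmDiff K L).indicator (fun x => ENNReal.ofReal ((‖x‖ ^ n)⁻¹)) x with hfdef
  have hf : Measurable f :=
    ((measurable_norm.pow_const n).inv.ennreal_ofReal).indicator hmeasKL
  set F : Metric.sphere (0 : EuclideanSpace ℝ (Fin n)) 1 × Ioi (0:ℝ) → ℝ≥0∞ :=
    fun p => f ((p.2 : ℝ) • (p.1 : EuclideanSpace ℝ (Fin n))) with hFdef
  have hF : Measurable F := by
    apply hf.comp
    exact ((continuous_subtype_val.comp continuous_snd).smul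
      (continuous_subtype_val.comp continuous_fst)).measurable
  -- inner integral computation
  have hinner : ∀ u : Metric.sphere (0 : EuclideanSpace ℝ (Fin n)) 1,
      ∫⁻ r : Ioi (0:ℝ), F (u, r) ∂(Measure.volumeIoiPow (n-1))
        = ENNReal.ofReal (gfun u) := by
    intro u
    obtain ⟨hKp, hK⟩ := radialFn_spec hKcp hKcv hKint (hsp u)
    obtain ⟨hLp, hL⟩ := radialFn_spec hLcp hLcv hLint (hsp u)
    set a := radialFn K (u : EuclideanSpace ℝ (Fin n))
    set b := radialFn L (u : EuclideanSpace ℝ (Fin n))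
    set m := min a b with hm'
    set M := max a b with hM'
    have hm : 0 < m := lt_min hKp hLp
    have hmM : m ≤ M := min_le_max
    rw [Measure.volumeIoiPow, lintegral_withDensity_eq_lintegral_mul _
      ((measurable_subtype_coe.pow_const _).ennreal_ofReal)
      (show Measurable fun r : Ioi (0:ℝ) => F (u, r) from
        hF.comp (measurable_const.prodMk measurable_id))]
    refine Eq.trans (lintegral_subtype_comap measurableSet_Ioi
      (fun s : ℝ => ENNReal.ofReal (s ^ (n-1)) * f (s • (u : EuclideanSpace ℝ (Fin n))))) ?_
    have h2 : ∀ r ∈ Ioi (0:ℝ),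
        ENNReal.ofReal (r ^ (n-1)) * f (r • (u : EuclideanSpace ℝ (Fin n)))
          = (Ioc m M).indicator (fun r => ENNReal.ofReal r⁻¹) r := by
      intro r hr
      have hr : (0:ℝ) < r := hr
      have hmem : r • (u : EuclideanSpace ℝ (Fin n)) ∈ symmDiff K L ↔ r ∈ Ioc m M := by
        simp only [Set.mem_symmDiff, hK r hr.le, hL r hr.le, Set.mem_Ioc, hm', hM',
          min_lt_iff, le_max_iff, not_le]
        constructor
        · rintro (⟨h1, h2⟩ | ⟨h1, h2⟩)
          exacts [⟨Or.inr h2, Or.inl h1⟩, ⟨Or.inl h2, Or.inr h1⟩]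
        · rintro ⟨h1 | h1, h2 | h2⟩
          · exact absurd h2 (not_le.2 h1)
          · exact Or.inr ⟨h2, h1⟩
          · exact Or.inl ⟨h2, h1⟩
          · exact absurd h2 (not_le.2 h1)
      by_cases hrm : r ∈ Ioc m M
      · rw [Set.indicator_of_mem hrm]
        simp only [hfdef]
        rw [Set.indicator_of_mem (hmem.2 hrm)]
        have hnorm : ‖r • (u : EuclideanSpace ℝ (Fin n))‖ = r := by
          rw [norm_smul, hsp u, mul_one, Real.norm_eq_abs, abs_of_pos hr]
        rw [hnorm, ← ENNReal.ofReal_mul (by positivity)]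
        congr 1
        have hn0 : n ≠ 0 := by omega
        rw [← pow_sub_one_mul hn0 r, mul_inv, ← mul_assoc,
          mul_inv_cancel₀ (pow_ne_zero _ hr.ne'), one_mul]
      · rw [Set.indicator_of_notMem hrm]
        simp only [hfdef]
        rw [Set.indicator_of_notMem (fun h => hrm (hmem.1 h)), mul_zero]
    rw [setLIntegral_congr_fun measurableSet_Ioi
      h2]
    have hIocsub : Ioc m M ∩ Ioi (0:ℝ) = Ioc m M :=
      Set.inter_eq_left.2 fun x hx => lt_trans hm hx.1
    rw [lintegral_indicator measurableSet_Ioc, Measure.restrict_restrict measurableSet_Ioc,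
      hIocsub]
    have hIntOn : IntegrableOn (fun r : ℝ => r⁻¹) (Ioc m M) := by
      have h := intervalIntegral.intervalIntegrable_one_div
        (a := m) (b := M) (f := fun x : ℝ => x) (μ := volume)
        (fun x hx => by
          rw [Set.uIcc_of_le hmM] at hx
          exact (lt_of_lt_of_le hm hx.1).ne')
        continuousOn_id
      simp only [one_div] at h
      exact (intervalIntegrable_iff_integrableOn_Ioc_of_le hmM).1 h
    rw [← ofReal_integral_eq_lintegral_ofReal hIntOn (by
      filter_upwards [ae_restrict_mem measurableSet_Ioc] with x hx
      exact inv_nonneg.2 (le_of_lt (lt_trans hm hx.1)))]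
    rw [← intervalIntegral.integral_of_le hmM,
      integral_inv (by
        rw [Set.uIcc_of_le hmM]
        rintro ⟨h1, -⟩
        exact absurd h1 (not_le.2 hm)),
      Real.log_div (lt_of_lt_of_le hm hmM).ne' hm.ne']
    rw [hgfun]
    rw [log_max_sub_log_min hKp hLp]
  -- main polar coordinate identity
  have key : (∫⁻ x in symmDiff K L, ENNReal.ofReal ((‖x‖ ^ n)⁻¹) ∂volume)
      = ∫⁻ u, ENNReal.ofReal (gfun u) ∂ν := by
    have mp := (volume :
      Measure (EuclideanSpace ℝ (Fin n))).measurePreserving_homeomorphUnitSphereProd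
    calc ∫⁻ x in symmDiff K L, ENNReal.ofReal ((‖x‖ ^ n)⁻¹) ∂volume
        = ∫⁻ x, f x ∂(volume : Measure (EuclideanSpace ℝ (Fin n))) :=
          (lintegral_indicator hmeasKL _).symm
      _ = ∫⁻ x, f x ∂((volume : Measure (EuclideanSpace ℝ (Fin n))).restrict
            ({(0:EuclideanSpace ℝ (Fin n))}ᶜ)) := by
          rw [MeasureTheory.restrict_compl_singleton]
      _ = ∫⁻ x : ({(0:EuclideanSpace ℝ (Fin n))}ᶜ : Set (EuclideanSpace ℝ (Fin n))), f x
            ∂(Measure.comap Subtype.val volume) :=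
          (lintegral_subtype_comap (measurableSet_singleton _).compl _).symm
      _ = ∫⁻ x : ({(0:EuclideanSpace ℝ (Fin n))}ᶜ : Set (EuclideanSpace ℝ (Fin n))),
            F (homeomorphUnitSphereProd (EuclideanSpace ℝ (Fin n)) x)
            ∂(Measure.comap Subtype.val volume) := by
          refine lintegral_congr fun x => ?_
          have hx : (x : EuclideanSpace ℝ (Fin n)) ≠ 0 := x.2
          simp only [hFdef, homeomorphUnitSphereProd_apply_fst_coe,
            homeomorphUnitSphereProd_apply_snd_coe]
          rw [smul_inv_smul₀ (norm_ne_zero_iff.2 hx)]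
      _ = ∫⁻ p, F p ∂(ν.prod (Measure.volumeIoiPow
            (Module.finrank ℝ (EuclideanSpace ℝ (Fin n)) - 1))) :=
          mp.lintegral_comp hF
      _ = ∫⁻ p, F p ∂(ν.prod (Measure.volumeIoiPow (n - 1))) := by
          rw [finrank_euclideanSpace_fin]
      _ = ∫⁻ u, ∫⁻ r, F (u, r) ∂(Measure.volumeIoiPow (n-1)) ∂ν :=
          lintegral_prod F hF.aemeasurable
      _ = ∫⁻ u, ENNReal.ofReal (gfun u) ∂ν := lintegral_congr hinner
  -- measurability of gfun
  have hlm : Measurable fun u : Metric.sphere (0:EuclideanSpace ℝ (Fin n)) 1 =>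
      ∫⁻ r, F (u, r) ∂(Measure.volumeIoiPow (n-1)) := hF.lintegral_prod_right'
  have hgm : Measurable gfun := by
    have hgid : gfun = fun u =>
        (∫⁻ r, F (u, r) ∂(Measure.volumeIoiPow (n-1))).toReal := by
      funext u; rw [hinner u, ENNReal.toReal_ofReal (abs_nonneg _)]
    rw [hgid]; exact hlm.ennreal_toReal
  -- boundedness, hence finiteness
  have hbd : ∃ C : ℝ, ∀ u, gfun u ≤ C := by
    obtain ⟨R, hR⟩ := (hKcp.union hLcp).isBounded.subset_closedBall 0
    have h0 : (0:EuclideanSpace ℝ (Fin n)) ∈ interior (K ∩ L) := by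
      rw [interior_inter]; exact ⟨hKint, hLint⟩
    obtain ⟨ε, hε, hball⟩ := Metric.mem_nhds_iff.1 (mem_interior_iff_mem_nhds.1 h0)
    refine ⟨Real.log R - Real.log (ε/2), fun u => ?_⟩
    have hlb : ∀ (J : Set (EuclideanSpace ℝ (Fin n))), 0 < radialFn J (u:EuclideanSpace ℝ (Fin n)) →
        (∀ r : ℝ, 0 ≤ r → (r • (u:EuclideanSpace ℝ (Fin n)) ∈ J ↔ r ≤ radialFn J u)) →
        J ⊆ K ∪ L → Metric.ball (0:EuclideanSpace ℝ (Fin n)) ε ⊆ J →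
        Real.log (ε/2) ≤ Real.log (radialFn J u) ∧ Real.log (radialFn J u) ≤ Real.log R := by
      intro J hJp hJ hsub hbJ
      have h1 : ε/2 ≤ radialFn J (u:EuclideanSpace ℝ (Fin n)) := by
        refine (hJ (ε/2) (by linarith)).1 (hbJ ?_)
        rw [mem_ball_zero_iff, norm_smul, hsp u, mul_one, Real.norm_eq_abs,
          abs_of_pos (by linarith)]
        linarith
      have h2 : radialFn J (u:EuclideanSpace ℝ (Fin n)) ≤ R := by
        have hmem := hR (hsub ((hJ _ hJp.le).2 le_rfl))
        rw [mem_closedBall_zero_iff, norm_smul, hsp u, mul_one, Real.norm_eq_abs,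
          abs_of_pos hJp] at hmem
        exact hmem
      exact ⟨(Real.log_le_log_iff (by linarith) hJp).2 h1,
        (Real.log_le_log_iff hJp (lt_of_lt_of_le hJp h2)).2 h2⟩
    obtain ⟨hKp, hK⟩ := radialFn_spec hKcp hKcv hKint (hsp u)
    obtain ⟨hLp, hL⟩ := radialFn_spec hLcp hLcv hLint (hsp u)
    have hKb := hlb K hKp hK (fun x hx => Or.inl hx) (fun x hx => (hball hx).1)
    have hLb := hlb L hLp hL (fun x hx => Or.inr hx) (fun x hx => (hball hx).2)
    show |Real.log (radialFn K (u:EuclideanSpace ℝ (Fin n)))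
      - Real.log (radialFn L (u:EuclideanSpace ℝ (Fin n)))| ≤ _
    exact abs_sub_le_iff.2 ⟨by linarith [hKb.1, hKb.2, hLb.1, hLb.2],
      by linarith [hKb.1, hKb.2, hLb.1, hLb.2]⟩
  obtain ⟨C, hC⟩ := hbd
  have hTne : (∫⁻ u, ENNReal.ofReal (gfun u) ∂ν) ≠ ⊤ := by
    refine ne_of_lt (lt_of_le_of_lt
      (lintegral_mono fun u => ENNReal.ofReal_le_ofReal (hC u)) ?_)
    rw [lintegral_const]
    exact ENNReal.mul_lt_top ENNReal.ofReal_lt_top (measure_lt_top ν _)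
  -- convert Bochner integrals to lintegrals
  have hA : (∫ x in symmDiff K L, ‖x‖ ^ (-(n:ℝ)))
      = (∫⁻ x in symmDiff K L, ENNReal.ofReal ((‖x‖ ^ n)⁻¹) ∂volume).toReal := by
    have hrw : ∀ x : EuclideanSpace ℝ (Fin n), ‖x‖ ^ (-(n:ℝ)) = (‖x‖ ^ n)⁻¹ := fun x => by
      rw [Real.rpow_neg (norm_nonneg x), Real.rpow_natCast]
    rw [integral_congr_ae (Filter.Eventually.of_forall fun x => hrw x)]
    rw [integral_eq_lintegral_of_nonneg_ae
      (Filter.Eventually.of_forall fun x => inv_nonneg.2 (pow_nonneg (norm_nonneg _) _))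
      ((measurable_norm.pow_const n).inv).aestronglyMeasurable]
  have hB : (∫ u, gfun u ∂(sphereProb n))
      = ((ν Set.univ)⁻¹ * ∫⁻ u, ENNReal.ofReal (gfun u) ∂ν).toReal := by
    rw [integral_eq_lintegral_of_nonneg_ae
      (Filter.Eventually.of_forall fun u => abs_nonneg _) hgm.aestronglyMeasurable]
    unfold sphereProb
    rw [lintegral_smul_measure, smul_eq_mul]
  have hνuniv : (ν Set.univ).toReal = (n:ℝ) * unitBallVolume n := by
    rw [hν, Measure.toSphere_apply_univ, ENNReal.toReal_mul, finrank_euclideanSpace_fin,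
      ENNReal.toReal_natCast]
    unfold unitBallVolume
    rw [Measure.addHaar_closedBall_eq_addHaar_ball]
  calc (∫ u, gfun u ∂(sphereProb n))
      = ((ν Set.univ)⁻¹ * ∫⁻ u, ENNReal.ofReal (gfun u) ∂ν).toReal := hB
    _ = (ν Set.univ).toReal⁻¹
        * (∫⁻ x in symmDiff K L, ENNReal.ofReal ((‖x‖ ^ n)⁻¹) ∂volume).toReal := by
        rw [ENNReal.toReal_mul, ENNReal.toReal_inv, key]
    _ = (1 / ((n : ℝ) * unitBallVolume n)) * ∫ x in symmDiff K L, ‖x‖ ^ (-(n:ℝ)) := by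
        rw [hA, hνuniv, one_div]

end part2

lemma log_add_log_sub_two_log_min {a b : ℝ} (ha : 0 < a) (hb : 0 < b) :
    Real.log a + Real.log b - 2 * Real.log (min a b) = |Real.log (a / b)| := by
  rw [Real.log_div ha.ne' hb.ne']
  rcases le_total a b with h | h
  · rw [min_eq_left h, abs_of_nonpos (sub_nonpos.2 ((Real.log_le_log_iff ha hb).2 h))]; ring
  · rw [min_eq_right h, abs_of_nonneg (sub_nonneg.2 ((Real.log_le_log_iff hb ha).2 h))]; ring

/-- For convex bodies `K, L ⊆ ℝⁿ` (`n ≥ 2`) containing the origin in their interiors: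
`∫_{S^{n-1}} (ln ρ_K + ln ρ_L - 2 ln ρ_{K∩L}) dσ = ∫_{S^{n-1}} |ln (ρ_K/ρ_L)| dσ`
`= (1/(n |Dₙ|)) ∫_{K △ L} ‖x‖^{-n} dx`. -/
theorem stmt6 {n : ℕ} (hn : 2 ≤ n)
    (K L : Set (EuclideanSpace ℝ (Fin n)))
    (hKcp : IsCompact K) (hKcv : Convex ℝ K) (hKint : 0 ∈ interior K)
    (hLcp : IsCompact L) (hLcv : Convex ℝ L) (hLint : 0 ∈ interior L) :
    (∫ u : Metric.sphere (0 : EuclideanSpace ℝ (Fin n)) 1,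
        (Real.log (radialFn K ↑u) + Real.log (radialFn L ↑u)
          - 2 * Real.log (radialFn (K ∩ L) ↑u)) ∂(sphereProb n))
      = ∫ u : Metric.sphere (0 : EuclideanSpace ℝ (Fin n)) 1,
          |Real.log (radialFn K ↑u / radialFn L ↑u)| ∂(sphereProb n)
    ∧ (∫ u : Metric.sphere (0 : EuclideanSpace ℝ (Fin n)) 1,
          |Real.log (radialFn K ↑u / radialFn L ↑u)| ∂(sphereProb n))
      = (1 / ((n : ℝ) * unitBallVolume n)) *
          ∫ x in symmDiff K L, ‖x‖ ^ (-(n : ℝ)) := by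
  constructor
  · refine integral_congr_ae (Filter.Eventually.of_forall fun u => ?_)
    show Real.log (radialFn K ↑u) + Real.log (radialFn L ↑u)
        - 2 * Real.log (radialFn (K ∩ L) ↑u)
      = |Real.log (radialFn K ↑u / radialFn L ↑u)|
    have hu : ‖(u : EuclideanSpace ℝ (Fin n))‖ = 1 := mem_sphere_zero_iff_norm.1 u.2
    obtain ⟨hKp, -⟩ := radialFn_spec hKcp hKcv hKint hu
    obtain ⟨hLp, -⟩ := radialFn_spec hLcp hLcv hLint hu
    rw [radialFn_inter hKcp hKcv hKint hLcp hLcv hLint hu]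
    exact log_add_log_sub_two_log_min hKp hLp
  · calc ∫ u : Metric.sphere (0 : EuclideanSpace ℝ (Fin n)) 1,
          |Real.log (radialFn K ↑u / radialFn L ↑u)| ∂(sphereProb n)
        = ∫ u : Metric.sphere (0 : EuclideanSpace ℝ (Fin n)) 1,
            |Real.log (radialFn K ↑u) - Real.log (radialFn L ↑u)| ∂(sphereProb n) := by
          refine integral_congr_ae (Filter.Eventually.of_forall fun u => ?_)
          show |Real.log (radialFn K ↑u / radialFn L ↑u)|
            = |Real.log (radialFn K ↑u) - Real.log (radialFn L ↑u)|
          have hu : ‖(u : EuclideanSpace ℝ (Fin n))‖ = 1 := mem_sphere_zero_iff_norm.1 u.2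
          obtain ⟨hKp, -⟩ := radialFn_spec hKcp hKcv hKint hu
          obtain ⟨hLp, -⟩ := radialFn_spec hLcp hLcv hLint hu
          rw [Real.log_div hKp.ne' hLp.ne']
      _ = _ := part2 hn K L hKcp hKcv hKint hLcp hLcv hLint
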